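/- Let H be a real Hilbert space with orthonormal (Hilbert) basis (e_γ)_{γ∈Γ} indexed by a countable set Γ, let (w_γ)_{γ∈Γ} be weights with w_γ ≥ c for a fixed c > 0, and let (p_γ)_{γ∈Γ} be exponents with 1 ≤ p_γ ≤ 2. Suppose a sequence (v_k)_{k∈ℕ} in H converges weakly to v ∈ H, that Σ_γ w_γ |⟨v, e_γ⟩|^{p_γ} < ∞, and that Σ_γ w_γ |⟨v_k, e_γ⟩|^{p_γ} → Σ_γ w_γ |⟨v, e_γ⟩|^{p_γ} as k → ∞. Then (v_k) converges to v in norm: ‖v − v_k‖ → 0 as k → ∞. -/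

import Mathlib

open scoped RealInnerProductSpace ENNReal

open Filter

/-- Splitting an `ℝ≥0∞`-valued `tsum` into a finite part and a tail. -/
lemma aux17_split {Γ : Type*} (h : Γ → ℝ≥0∞) (F : Finset Γ) :
    ∑ γ ∈ F, h γ + ∑' (γ : {x // x ∉ F}), h γ = ∑' γ, h γ := by
  have := Summable.tsum_add_tsum_compl (s := (↑F : Set Γ)) (f := h) ENNReal.summable ENNReal.summable
  rw [← this]
  congr 1
  exact (F.tsum_subtype h).symm

/-- Key pointwise bound: if the penalty of a coefficient is at most `c`, then its square is
controlled by `c⁻¹` times its penalty. -/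
lemma aux17_sq_le {c w p x : ℝ} (hc : 0 < c) (hw : c ≤ w) (hp1 : 1 ≤ p) (hp2 : p ≤ 2)
    (hx : w * |x| ^ p ≤ c) :
    ENNReal.ofReal (x ^ 2) ≤ (ENNReal.ofReal c)⁻¹ * ENNReal.ofReal (w * |x| ^ p) := by
  have hp0 : (0 : ℝ) < p := lt_of_lt_of_le one_pos hp1
  have habs : |x| ≤ 1 := by
    by_contra hgt
    push_neg at hgt
    have h1 : (1 : ℝ) < |x| ^ p :=
      (Real.one_lt_rpow_iff_of_pos (lt_trans one_pos hgt)).2 (Or.inl ⟨hgt, hp0⟩)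
    have : w * 1 < w * (|x| ^ p) :=
      mul_lt_mul_of_pos_left h1 (lt_of_lt_of_le hc hw)
    nlinarith
  have hx2 : x ^ 2 ≤ |x| ^ p := by
    rcases eq_or_lt_of_le (abs_nonneg x) with h0 | h0
    · have hx0 : x = 0 := abs_eq_zero.mp h0.symm
      simp [hx0, Real.zero_rpow (ne_of_gt hp0)]
    · have h2 : |x| ^ (2 : ℝ) ≤ |x| ^ p :=
        Real.rpow_le_rpow_of_exponent_ge h0 habs hp2
      calc x ^ 2 = |x| ^ 2 := (sq_abs x).symm
        _ = |x| ^ ((2 : ℕ) : ℝ) := (Real.rpow_natCast _ 2).symm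
        _ = |x| ^ (2 : ℝ) := by norm_num
        _ ≤ |x| ^ p := h2
  have hrp : 0 ≤ |x| ^ p := Real.rpow_nonneg (abs_nonneg x) p
  have hreal : x ^ 2 ≤ c⁻¹ * (w * |x| ^ p) := by
    have h1 : c * (x ^ 2) ≤ w * |x| ^ p := by nlinarith
    have h2 : c⁻¹ * (c * x ^ 2) ≤ c⁻¹ * (w * |x| ^ p) :=
      mul_le_mul_of_nonneg_left h1 (le_of_lt (inv_pos.mpr hc))
    rwa [← mul_assoc, inv_mul_cancel₀ (ne_of_gt hc), one_mul] at h2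
  calc ENNReal.ofReal (x ^ 2) ≤ ENNReal.ofReal (c⁻¹ * (w * |x| ^ p)) :=
        ENNReal.ofReal_le_ofReal hreal
    _ = ENNReal.ofReal c⁻¹ * ENNReal.ofReal (w * |x| ^ p) := by
        rw [ENNReal.ofReal_mul (le_of_lt (inv_pos.mpr hc))]
    _ = (ENNReal.ofReal c)⁻¹ * ENNReal.ofReal (w * |x| ^ p) := by
        rw [ENNReal.ofReal_inv_of_pos hc]

/-- `(b - a)² ≤ 2b² + 2a²`, in `ℝ≥0∞` form. -/
lemma aux17_sub_sq_le (a b : ℝ) :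
    ENNReal.ofReal ((b - a) ^ 2)
      ≤ 2 * ENNReal.ofReal (b ^ 2) + 2 * ENNReal.ofReal (a ^ 2) := by
  calc ENNReal.ofReal ((b - a) ^ 2) ≤ ENNReal.ofReal (2 * b ^ 2 + 2 * a ^ 2) :=
        ENNReal.ofReal_le_ofReal (by nlinarith [sq_nonneg (a + b)])
    _ = ENNReal.ofReal (2 * b ^ 2) + ENNReal.ofReal (2 * a ^ 2) :=
        ENNReal.ofReal_add (by positivity) (by positivity)
    _ = 2 * ENNReal.ofReal (b ^ 2) + 2 * ENNReal.ofReal (a ^ 2) := by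
        rw [ENNReal.ofReal_mul (by norm_num), ENNReal.ofReal_mul (by norm_num),
          ENNReal.ofReal_ofNat]

/-- Radon–Riesz-type property: if `v_k ⇀ v` weakly, the penalty `Σ_γ w_γ |⟨v,e_γ⟩|^{p_γ}` of
`v` is finite, and the penalties of the `v_k` converge to that of `v`, then `v_k → v` in
norm. -/
theorem stmt_17
    {H : Type*} [NormedAddCommGroup H] [InnerProductSpace ℝ H] [CompleteSpace H]
    {Γ : Type*} [Countable Γ]
    (e : HilbertBasis Γ ℝ H)
    (w : Γ → ℝ) (c : ℝ) (hc : 0 < c) (hw : ∀ γ, c ≤ w γ)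
    (p : Γ → ℝ) (hp : ∀ γ, 1 ≤ p γ ∧ p γ ≤ 2)
    (vk : ℕ → H) (v : H)
    (hweak : ∀ y : H, Filter.Tendsto (fun k => ⟪vk k, y⟫) Filter.atTop (nhds ⟪v, y⟫))
    (hfin : (∑' γ, ENNReal.ofReal (w γ * |⟪v, e γ⟫| ^ (p γ))) ≠ ⊤)
    (hconv : Filter.Tendsto
      (fun k => ∑' γ, ENNReal.ofReal (w γ * |⟪vk k, e γ⟫| ^ (p γ)))
      Filter.atTop (nhds (∑' γ, ENNReal.ofReal (w γ * |⟪v, e γ⟫| ^ (p γ))))) :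
    Filter.Tendsto (fun k => ‖v - vk k‖) Filter.atTop (nhds 0) := by
  classical
  -- abbreviations
  set a : ℕ → Γ → ℝ := fun k γ => ⟪vk k, e γ⟫ with ha
  set b : Γ → ℝ := fun γ => ⟪v, e γ⟫ with hb
  set f : ℕ → Γ → ℝ≥0∞ := fun k γ => ENNReal.ofReal (w γ * |a k γ| ^ (p γ)) with hfdef
  set g : Γ → ℝ≥0∞ := fun γ => ENNReal.ofReal (w γ * |b γ| ^ (p γ)) with hgdef
  set d : ℕ → Γ → ℝ≥0∞ := fun k γ => ENNReal.ofReal ((b γ - a k γ) ^ 2) with hddef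
  have hcoef : ∀ γ, Tendsto (fun k => a k γ) atTop (nhds (b γ)) := fun γ => hweak (e γ)
  -- pointwise convergence of the penalties
  have hfg : ∀ γ, Tendsto (fun k => f k γ) atTop (nhds (g γ)) := by
    intro γ
    have h1 : Tendsto (fun k => |a k γ|) atTop (nhds |b γ|) := (hcoef γ).abs
    have h2 : Tendsto (fun k => |a k γ| ^ (p γ)) atTop (nhds (|b γ| ^ (p γ))) :=
      h1.rpow_const (Or.inr (le_of_lt (lt_of_lt_of_le one_pos (hp γ).1)))
    have h3 : Tendsto (fun k => w γ * |a k γ| ^ (p γ)) atTop (nhds (w γ * |b γ| ^ (p γ))) :=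
      h2.const_mul (w γ)
    exact (ENNReal.continuous_ofReal.tendsto _).comp h3
  -- pointwise convergence of the square differences to 0
  have hd0 : ∀ γ, Tendsto (fun k => d k γ) atTop (nhds 0) := by
    intro γ
    have h1 : Tendsto (fun k => b γ - a k γ) atTop (nhds (b γ - b γ)) :=
      tendsto_const_nhds.sub (hcoef γ)
    rw [sub_self] at h1
    have h2 : Tendsto (fun k => (b γ - a k γ) ^ 2) atTop (nhds ((0 : ℝ) ^ 2)) := h1.pow 2
    have h3 := (ENNReal.continuous_ofReal.tendsto _).comp h2
    simpa [Function.comp_def] using h3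
  set c' : ℝ≥0∞ := ENNReal.ofReal c with hc'def
  have hc'0 : c' ≠ 0 := by
    simp [hc'def, ENNReal.ofReal_eq_zero, not_le, hc]
  have hc'top : c' ≠ ⊤ := ENNReal.ofReal_ne_top
  set S : ℝ≥0∞ := ∑' γ, g γ with hSdef
  -- Main claim in ℝ≥0∞
  have hT : Tendsto (fun k => ∑' γ, d k γ) atTop (nhds 0) := by
    rw [ENNReal.tendsto_atTop_zero]
    intro ε hε
    -- replace ε by a finite positive one
    set ε' : ℝ≥0∞ := min ε 1 with hε'def
    have hε'0 : ε' ≠ 0 := (lt_min hε zero_lt_one).ne'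
    have hε'top : ε' ≠ ⊤ := ne_top_of_le_ne_top ENNReal.one_ne_top (min_le_right _ _)
    set ε₀ : ℝ≥0∞ := ε' / 2 / 2 / 2 with hε₀def
    have hε₀0 : ε₀ ≠ 0 := by
      simp only [hε₀def, ne_eq, ENNReal.div_eq_zero_iff]
      push_neg
      refine ⟨⟨⟨hε'0, ?_⟩, ?_⟩, ?_⟩ <;> norm_num
    set δ : ℝ≥0∞ := min c' (c' * ε₀) with hδdef
    have hδ0 : δ ≠ 0 :=
      (lt_min (ENNReal.ofReal_pos.mpr hc) (ENNReal.mul_pos hc'0 hε₀0)).ne' 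
    have hδc' : δ ≤ c' := min_le_left _ _
    have hδtop : δ ≠ ⊤ := ne_top_of_le_ne_top hc'top hδc'
    set δ₁ : ℝ≥0∞ := δ / 2 with hδ₁def
    set δ₂ : ℝ≥0∞ := δ / 2 / 2 with hδ₂def
    have hδ₂0 : 0 < δ₂ := by
      simp only [hδ₂def, ENNReal.div_pos_iff]
      constructor
      · simp only [ne_eq, ENNReal.div_eq_zero_iff, not_or]
        exact ⟨hδ0, by norm_num⟩
      · norm_num
    have hδ₁0 : 0 < δ₁ := by
      simp only [hδ₁def, ENNReal.div_pos_iff]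
      exact ⟨hδ0, by norm_num⟩
    -- pick a finite set F with small tail for g
    obtain ⟨F, hF⟩ : ∃ F : Finset Γ, ∑' (γ : {x // x ∉ F}), g γ < δ₂ :=
      ((tendsto_order.1 (ENNReal.tendsto_tsum_compl_atTop_zero hfin)).2 δ₂ hδ₂0).exists
    set SF : ℝ≥0∞ := ∑ γ ∈ F, g γ with hSFdef
    set Tg : ℝ≥0∞ := ∑' (γ : {x // x ∉ F}), g γ with hTgdef
    have hsplitg : SF + Tg = S := aux17_split g F
    have hStop : S ≠ ⊤ := hfin
    have hSFtop : SF ≠ ⊤ := by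
      refine ne_top_of_le_ne_top hStop ?_
      rw [← hsplitg]; exact le_self_add
    -- the three "eventually" facts
    have hEv1 : ∀ᶠ k in atTop, SF < ∑ γ ∈ F, f k γ + δ₂ := by
      have h1 : Tendsto (fun k => ∑ γ ∈ F, f k γ) atTop (nhds SF) :=
        tendsto_finset_sum F (fun γ _ => hfg γ)
      have h2 : Tendsto (fun k => ∑ γ ∈ F, f k γ + δ₂) atTop (nhds (SF + δ₂)) :=
        h1.add tendsto_const_nhds
      exact h2.eventually_const_lt (ENNReal.lt_add_right hSFtop (ne_of_gt hδ₂0))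
    have hEv2 : ∀ᶠ k in atTop, (∑' γ, f k γ) < S + δ₁ :=
      hconv.eventually_lt_const (ENNReal.lt_add_right hStop (ne_of_gt hδ₁0))
    have hEv3 : ∀ᶠ k in atTop, (∑ γ ∈ F, d k γ) < ε' / 2 := by
      have h1 : Tendsto (fun k => ∑ γ ∈ F, d k γ) atTop (nhds (∑ γ ∈ F, (0 : ℝ≥0∞))) :=
        tendsto_finset_sum F (fun γ _ => hd0 γ)
      rw [Finset.sum_const, smul_zero] at h1
      refine h1.eventually_lt_const ?_
      simp only [ENNReal.div_pos_iff]
      exact ⟨hε'0, by norm_num⟩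
    obtain ⟨N, hN⟩ := (hEv1.and (hEv2.and hEv3)).exists_forall_of_atTop
    refine ⟨N, fun n hn => ?_⟩
    obtain ⟨h1, h2, h3⟩ := hN n hn
    -- tail of f n is small
    have hFn_top : (∑ γ ∈ F, f n γ) ≠ ⊤ := by
      refine ne_top_of_le_ne_top (ne_top_of_lt h2) ?_
      rw [← aux17_split (f n) F]; exact le_self_add
    set Tf : ℝ≥0∞ := ∑' (γ : {x // x ∉ F}), f n γ with hTfdef
    have htail : Tf < δ := by
      have hkey : Tf + ∑ γ ∈ F, f n γ < (δ₂ + δ₂ + δ₁) + ∑ γ ∈ F, f n γ := by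
        calc Tf + ∑ γ ∈ F, f n γ = ∑ γ ∈ F, f n γ + Tf := by ring
          _ = ∑' γ, f n γ := aux17_split (f n) F
          _ < S + δ₁ := h2
          _ = SF + Tg + δ₁ := by rw [hsplitg]
          _ ≤ SF + δ₂ + δ₁ := by
              exact add_le_add_left (add_le_add_right (le_of_lt hF) SF) δ₁
          _ ≤ (∑ γ ∈ F, f n γ + δ₂) + δ₂ + δ₁ := by
              exact add_le_add_left (add_le_add_left (le_of_lt h1) δ₂) δ₁
          _ = (δ₂ + δ₂ + δ₁) + ∑ γ ∈ F, f n γ := by ring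
      have := (ENNReal.add_lt_add_iff_right hFn_top).mp hkey
      calc Tf < δ₂ + δ₂ + δ₁ := this
        _ = δ := by
          rw [hδ₂def, hδ₁def, ENNReal.add_halves, ENNReal.add_halves]
    -- per-term bounds on the tail
    have hδ₂δ : δ₂ ≤ δ := by
      calc δ₂ = δ / 2 / 2 := rfl
        _ ≤ δ / 2 := ENNReal.half_le_self
        _ ≤ δ := ENNReal.half_le_self
    have hb_term : ∀ γ : {x // x ∉ F}, ENNReal.ofReal ((b γ.1) ^ 2) ≤ c'⁻¹ * g γ.1 := by
      intro γ
      have h4 : g γ.1 ≤ c' :=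
        le_trans (ENNReal.le_tsum γ) (le_trans (le_of_lt hF) (le_trans hδ₂δ hδc'))
      have h5 : w γ.1 * |b γ.1| ^ (p γ.1) ≤ c :=
        (ENNReal.ofReal_le_ofReal_iff (le_of_lt hc)).mp h4
      exact aux17_sq_le hc (hw γ.1) (hp γ.1).1 (hp γ.1).2 h5
    have ha_term : ∀ γ : {x // x ∉ F}, ENNReal.ofReal ((a n γ.1) ^ 2) ≤ c'⁻¹ * f n γ.1 := by
      intro γ
      have h4 : f n γ.1 ≤ c' :=
        le_trans (ENNReal.le_tsum γ) (le_trans (le_of_lt htail) hδc')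
      have h5 : w γ.1 * |a n γ.1| ^ (p γ.1) ≤ c :=
        (ENNReal.ofReal_le_ofReal_iff (le_of_lt hc)).mp h4
      exact aux17_sq_le hc (hw γ.1) (hp γ.1).1 (hp γ.1).2 h5
    -- sum the tail bounds
    have hbsum : ∑' (γ : {x // x ∉ F}), ENNReal.ofReal ((b γ.1) ^ 2) ≤ c'⁻¹ * Tg := by
      calc ∑' (γ : {x // x ∉ F}), ENNReal.ofReal ((b γ.1) ^ 2)
          ≤ ∑' (γ : {x // x ∉ F}), c'⁻¹ * g γ.1 := ENNReal.tsum_le_tsum hb_term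
        _ = c'⁻¹ * Tg := ENNReal.tsum_mul_left
    have hasum : ∑' (γ : {x // x ∉ F}), ENNReal.ofReal ((a n γ.1) ^ 2) ≤ c'⁻¹ * Tf := by
      calc ∑' (γ : {x // x ∉ F}), ENNReal.ofReal ((a n γ.1) ^ 2)
          ≤ ∑' (γ : {x // x ∉ F}), c'⁻¹ * f n γ.1 := ENNReal.tsum_le_tsum ha_term
        _ = c'⁻¹ * Tf := ENNReal.tsum_mul_left
    have hcdelta : c'⁻¹ * δ ≤ ε₀ := by
      calc c'⁻¹ * δ ≤ c'⁻¹ * (c' * ε₀) :=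
            mul_le_mul_right (min_le_right _ _) _
        _ = (c'⁻¹ * c') * ε₀ := by rw [mul_assoc]
        _ = ε₀ := by rw [ENNReal.inv_mul_cancel hc'0 hc'top, one_mul]
    -- the tail of d n
    have htaild : ∑' (γ : {x // x ∉ F}), d n γ.1 ≤ ε' / 2 := by
      have hterm : ∀ γ : {x // x ∉ F},
          d n γ.1 ≤ 2 * ENNReal.ofReal ((b γ.1) ^ 2) + 2 * ENNReal.ofReal ((a n γ.1) ^ 2) :=
        fun γ => aux17_sub_sq_le (a n γ.1) (b γ.1)
      calc ∑' (γ : {x // x ∉ F}), d n γ.1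
          ≤ ∑' (γ : {x // x ∉ F}),
              (2 * ENNReal.ofReal ((b γ.1) ^ 2) + 2 * ENNReal.ofReal ((a n γ.1) ^ 2)) :=
            ENNReal.tsum_le_tsum hterm
        _ = 2 * (∑' (γ : {x // x ∉ F}), ENNReal.ofReal ((b γ.1) ^ 2))
              + 2 * (∑' (γ : {x // x ∉ F}), ENNReal.ofReal ((a n γ.1) ^ 2)) := by
            rw [ENNReal.tsum_add, ENNReal.tsum_mul_left, ENNReal.tsum_mul_left]
        _ ≤ 2 * (c'⁻¹ * Tg) + 2 * (c'⁻¹ * Tf) := by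
            exact add_le_add (mul_le_mul_right hbsum 2) (mul_le_mul_right hasum 2)
        _ ≤ 2 * ε₀ + 2 * ε₀ := by
            refine add_le_add (mul_le_mul_right ?_ 2) (mul_le_mul_right ?_ 2)
            · calc c'⁻¹ * Tg ≤ c'⁻¹ * δ :=
                    mul_le_mul_right (le_trans (le_of_lt hF) hδ₂δ) _
                _ ≤ ε₀ := hcdelta
            · calc c'⁻¹ * Tf ≤ c'⁻¹ * δ := mul_le_mul_right (le_of_lt htail) _
                _ ≤ ε₀ := hcdelta
        _ = ε' / 2 := by
            rw [two_mul, ← add_assoc]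
            rw [hε₀def]
            rw [show ε' / 2 / 2 / 2 + ε' / 2 / 2 / 2 + ε' / 2 / 2 / 2 + ε' / 2 / 2 / 2
                = (ε' / 2 / 2 / 2 + ε' / 2 / 2 / 2) + (ε' / 2 / 2 / 2 + ε' / 2 / 2 / 2) by ring]
            rw [ENNReal.add_halves, ENNReal.add_halves]
    -- assemble
    calc ∑' γ, d n γ = ∑ γ ∈ F, d n γ + ∑' (γ : {x // x ∉ F}), d n γ.1 :=
          (aux17_split (d n) F).symm
      _ ≤ ε' / 2 + ε' / 2 := add_le_add (le_of_lt h3) htaild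
      _ = ε' := ENNReal.add_halves ε'
      _ ≤ ε := min_le_left _ _
  -- Parseval: convert the ℝ≥0∞ convergence into norm convergence
  have hpars : ∀ x : H, ENNReal.ofReal (‖x‖ ^ 2) = ∑' γ, ENNReal.ofReal (⟪x, e γ⟫ ^ 2) := by
    intro x
    have h1 : ∑' γ, ⟪x, e γ⟫ * ⟪e γ, x⟫ = ⟪x, x⟫ := e.tsum_inner_mul_inner x x
    have h2 : (fun γ => ⟪x, e γ⟫ * ⟪e γ, x⟫) = fun γ => ⟪x, e γ⟫ ^ 2 := by
      funext γ
      rw [real_inner_comm (e γ) x, sq]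
    have hsum : Summable fun γ => ⟪x, e γ⟫ ^ 2 := by
      have := e.summable_inner_mul_inner x x
      rwa [h2] at this
    rw [h2] at h1
    rw [← real_inner_self_eq_norm_sq, ← h1,
      ENNReal.ofReal_tsum_of_nonneg (fun γ => sq_nonneg _) hsum]
  have hT2 : Tendsto (fun k => ENNReal.ofReal (‖v - vk k‖ ^ 2)) atTop (nhds 0) := by
    have heq : ∀ k, ENNReal.ofReal (‖v - vk k‖ ^ 2) = ∑' γ, d k γ := by
      intro k
      rw [hpars (v - vk k)]
      congr 1
      funext γ
      rw [hddef]
      congr 2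
      rw [inner_sub_left]
    simpa only [heq] using hT
  have hT3 : Tendsto (fun k => ‖v - vk k‖ ^ 2) atTop (nhds 0) := by
    have h1 := (ENNReal.tendsto_toReal (by simp : (0 : ℝ≥0∞) ≠ ⊤)).comp hT2
    simp only [Function.comp_def, ENNReal.toReal_ofReal (sq_nonneg _), ENNReal.toReal_zero] at h1
    exact h1
  have hT4 := (Real.continuous_sqrt.tendsto 0).comp hT3
  simp only [Function.comp_def, Real.sqrt_zero] at hT4
  simpa only [Real.sqrt_sq (norm_nonneg _)] using hT4
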